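/- Every 2-colouring of the fan graph F_n has a monochromatic component with at least ⌊√n⌋ vertices. -/

import Mathlib

open SimpleGraph

universe u v

/-- The strong product of two simple graphs. -/
def StrongProd {α : Type u} {β : Type v} (G : SimpleGraph α) (H : SimpleGraph β) :
    SimpleGraph (α × β) where
  Adj x y := (x.1 = y.1 ∧ H.Adj x.2 y.2) ∨ (x.2 = y.2 ∧ G.Adj x.1 y.1) ∨
    (G.Adj x.1 y.1 ∧ H.Adj x.2 y.2)
  symm := by
    constructor
    rintro x y (⟨h1, h2⟩ | ⟨h1, h2⟩ | ⟨h1, h2⟩)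
    · exact Or.inl ⟨h1.symm, h2.symm⟩
    · exact Or.inr (Or.inl ⟨h1.symm, h2.symm⟩)
    · exact Or.inr (Or.inr ⟨h1.symm, h2.symm⟩)
  loopless := by
    constructor
    rintro x (⟨h1, h2⟩ | ⟨h1, h2⟩ | ⟨h1, h2⟩)
    · exact h2.ne rfl
    · exact h2.ne rfl
    · exact h1.ne rfl

/-- The fan graph `F_n`: a path on `n` vertices (vertices `1,…,n`) together with
one dominant vertex (vertex `0`) adjacent to all path vertices. -/
def Fan (n : ℕ) : SimpleGraph (Fin (n + 1)) :=
  SimpleGraph.fromRel (fun u v => u = 0 ∨ u.val + 1 = v.val)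

/-- The cone over `m` disjoint copies of `G`: `m` pairwise disjoint copies of `G`
together with one new vertex adjacent to every vertex of every copy. -/
def GraphCone {V : Type u} (m : ℕ) (G : SimpleGraph V) :
    SimpleGraph (Option (Fin m × V)) where
  Adj x y :=
    match x, y with
    | none, none => False
    | none, some _ => True
    | some _, none => True
    | some (i, _u), some (j, _v) => i = j ∧ G.Adj _u _v
  symm := by
    constructor
    rintro (_ | ⟨i, u⟩) (_ | ⟨j, v⟩) h
    · exact h
    · trivial
    · trivial
    · exact ⟨h.1.symm, h.2.symm⟩
  loopless := by
    constructor
    rintro (_ | ⟨i, u⟩) h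
    · exact h
    · exact h.2.ne rfl

/-- `G` has a tree-decomposition of width at most `t`. -/
def TreewidthLE {V : Type u} (G : SimpleGraph V) (t : ℕ) : Prop :=
  ∃ (ι : Type) (T : SimpleGraph ι) (W : ι → Finset V),
    T.IsTree ∧
    (∀ ⦃u v : V⦄, G.Adj u v → ∃ x, u ∈ W x ∧ v ∈ W x) ∧
    (∀ v : V, (T.induce {x | v ∈ W x}).Connected) ∧
    (∀ x, (W x).card ≤ t + 1)

/-- A set of vertices is monochromatic under a colouring `f`. -/
def IsMonochromatic {V : Type u} {c : ℕ} (f : V → Fin c) (S : Finset V) : Prop :=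
  ∀ u ∈ S, ∀ v ∈ S, f u = f v

/-- Every monochromatic component of the colouring `f` of `G` has at most `k` vertices. -/
def ClusterLE {V : Type u} {c : ℕ} (G : SimpleGraph V) (f : V → Fin c) (k : ℕ) : Prop :=
  ∀ S : Finset V, IsMonochromatic f S → (G.induce (S : Set V)).Connected → S.card ≤ k

/-- Every monochromatic component of the colouring `f` of `G` has at most `b` vertices
(real-valued bound). -/
def ClusterLEReal {V : Type u} {c : ℕ} (G : SimpleGraph V) (f : V → Fin c) (b : ℝ) : Prop :=
  ∀ S : Finset V, IsMonochromatic f S → (G.induce (S : Set V)).Connected → (S.card : ℝ) ≤ b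
/-- Every 2-colouring of the fan graph `F_n` has a monochromatic component with at
least `⌊√n⌋` vertices. -/
lemma connected_of_adj_center {V : Type u} (G : SimpleGraph V) (S : Set V) (v0 : V)
    (h0 : v0 ∈ S) (h : ∀ v ∈ S, v = v0 ∨ G.Adj v0 v) : (G.induce S).Connected := by
  rw [SimpleGraph.connected_iff]
  refine ⟨?_, ⟨⟨v0, h0⟩⟩⟩
  have key : ∀ x : S, (G.induce S).Reachable ⟨v0, h0⟩ x := by
    rintro ⟨x, hx⟩
    rcases h x hx with rfl | hadj
    · exact SimpleGraph.Reachable.refl _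
    · exact SimpleGraph.Adj.reachable (by simpa using hadj)
  intro a b
  exact (key a).symm.trans (key b)

theorem fan_two_colouring (n : ℕ) (f : Fin (n + 1) → Fin 2) :
    ∃ S : Finset (Fin (n + 1)), IsMonochromatic f S ∧
      ((Fan n).induce (S : Set (Fin (n + 1)))).Connected ∧ Nat.sqrt n ≤ S.card := by
  set s := Nat.sqrt n with hs
  have hsq : s * s ≤ n := by
    have := Nat.sqrt_le' n
    simpa [hs, pow_two] using this
  by_cases hs0 : s = 0
  · -- trivial case
    refine ⟨{0}, ?_, ?_, ?_⟩
    · intro u hu v hv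
      simp only [Finset.mem_singleton] at hu hv
      rw [hu, hv]
    · exact connected_of_adj_center _ _ 0 (by simp) (by intro v hv; simp at hv; left; exact hv)
    · simp [hs0]
  have hs1 : 1 ≤ s := Nat.one_le_iff_ne_zero.mpr hs0
  classical
  set A : Finset (Fin (n + 1)) := Finset.univ.filter (fun v => f v = f 0) with hA
  by_cases hcard : s ≤ A.card
  · -- take the colour class of vertex 0, star-connected through 0
    refine ⟨A, ?_, ?_, hcard⟩
    · intro u hu v hv
      simp only [hA, Finset.mem_filter] at hu hv
      rw [hu.2, hv.2]
    · apply connected_of_adj_center _ _ 0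
      · simp [hA]
      · intro v hv
        by_cases hv0 : v = 0
        · left; exact hv0
        · right
          refine ⟨Ne.symm hv0, ?_⟩
          exact Or.inl (Or.inl rfl)
  · push_neg at hcard
    -- few vertices of colour f 0; find a window of length s avoiding colour f 0
    set w : ℕ → Fin (n + 1) := fun m => ⟨m % (n + 1), Nat.mod_lt _ (Nat.succ_pos n)⟩ with hw
    have hwval : ∀ m, m ≤ n → (w m).val = m := by
      intro m hm
      simp only [hw]
      exact Nat.mod_eq_of_lt (by omega)
    have hbound : ∀ j i, j < s → i < s → j * s + i + 1 ≤ n := by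
      intro j i hj hi
      have : (j + 1) * s ≤ s * s := Nat.mul_le_mul_right s hj
      nlinarith
    have key : ∃ j < s, ∀ i < s, f (w (j * s + i + 1)) ≠ f 0 := by
      by_contra hcon
      push_neg at hcon
      choose g hg1 hg2 using hcon
      -- build an injection Fin s → A \ {0}
      set T : Finset (Fin (n + 1)) :=
        (Finset.range s).attach.image (fun j => w (j.1 * s + g j.1 (Finset.mem_range.mp j.2) + 1))
        with hT
      have hTcard : T.card = s := by
        rw [hT, Finset.card_image_of_injective _ ?_, Finset.card_attach, Finset.card_range]
        rintro ⟨j1, hj1⟩ ⟨j2, hj2⟩ hEq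
        simp only [Finset.mem_range] at hj1 hj2
        have e1 := hwval _ (hbound _ _ hj1 (hg1 _ hj1))
        have e2 := hwval _ (hbound _ _ hj2 (hg1 _ hj2))
        have : j1 * s + g j1 hj1 + 1 = j2 * s + g j2 hj2 + 1 := by
          have hEq' : w (j1 * s + g j1 hj1 + 1) = w (j2 * s + g j2 hj2 + 1) := hEq
          have := congrArg Fin.val hEq'
          rw [e1, e2] at this
          exact this
        have hg1' := hg1 _ hj1
        have hg2' := hg1 _ hj2
        have : j1 = j2 := by
          rcases lt_trichotomy j1 j2 with h | h | h
          · exfalso; nlinarith [Nat.mul_le_mul_right s (Nat.succ_le_of_lt h)]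
          · exact h
          · exfalso; nlinarith [Nat.mul_le_mul_right s (Nat.succ_le_of_lt h)]
        subst this
        rfl
      have hTsub : insert (0 : Fin (n + 1)) T ⊆ A := by
        intro x hx
        rcases Finset.mem_insert.mp hx with rfl | hx
        · simp [hA]
        · rw [hT] at hx
          obtain ⟨j, _, rfl⟩ := Finset.mem_image.mp hx
          simp only [hA, Finset.mem_filter, Finset.mem_univ, true_and]
          exact hg2 _ (Finset.mem_range.mp j.2)
      have h0T : (0 : Fin (n + 1)) ∉ T := by
        rw [hT]
        intro h
        obtain ⟨j, _, hj⟩ := Finset.mem_image.mp h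
        have hjlt := Finset.mem_range.mp j.2
        have e1 := hwval _ (hbound _ _ hjlt (hg1 _ hjlt))
        have hj' : w (j.1 * s + g j.1 hjlt + 1) = 0 := hj
        have := congrArg Fin.val hj'
        rw [e1, Fin.val_zero] at this
        omega
      have : s + 1 ≤ A.card := by
        have := Finset.card_le_card hTsub
        rwa [Finset.card_insert_of_notMem h0T, hTcard] at this
      omega
    obtain ⟨j, hj, hmono⟩ := key
    set S : Finset (Fin (n + 1)) := (Finset.range s).image (fun i => w (j * s + i + 1)) with hS
    have hSmem : ∀ i, i < s → w (j * s + i + 1) ∈ S := by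
      intro i hi
      exact Finset.mem_image.mpr ⟨i, Finset.mem_range.mpr hi, rfl⟩
    have hadj : ∀ i, i + 1 < s →
        (Fan n).Adj (w (j * s + i + 1)) (w (j * s + (i + 1) + 1)) := by
      intro i hi
      have e1 := hwval _ (hbound j i hj (by omega))
      have e2 := hwval _ (hbound j (i + 1) hj hi)
      constructor
      · intro h
        have := congrArg Fin.val h
        omega
      · left; right; omega
    refine ⟨S, ?_, ?_, ?_⟩
    · intro u hu v hv
      rw [hS] at hu hv
      obtain ⟨i1, hi1, rfl⟩ := Finset.mem_image.mp hu
      obtain ⟨i2, hi2, rfl⟩ := Finset.mem_image.mp hv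
      have h1 := hmono _ (Finset.mem_range.mp hi1)
      have h2 := hmono _ (Finset.mem_range.mp hi2)
      show f (w (j * s + i1 + 1)) = f (w (j * s + i2 + 1))
      omega
    · rw [SimpleGraph.connected_iff]
      refine ⟨?_, ⟨⟨w (j * s + 0 + 1), hSmem 0 hs1⟩⟩⟩
      have reach : ∀ i (hi : i < s),
          ((Fan n).induce (S : Set (Fin (n + 1)))).Reachable
            ⟨w (j * s + 0 + 1), hSmem 0 hs1⟩ ⟨w (j * s + i + 1), hSmem i hi⟩ := by
        intro i
        induction i with
        | zero => intro hi; exact SimpleGraph.Reachable.refl _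
        | succ k ih =>
          intro hi
          have hk : k < s := by omega
          refine (ih hk).trans (SimpleGraph.Adj.reachable ?_)
          simpa using hadj k hi
      rintro ⟨a, ha⟩ ⟨b, hb⟩
      obtain ⟨i1, hi1, rfl⟩ := Finset.mem_image.mp ha
      obtain ⟨i2, hi2, rfl⟩ := Finset.mem_image.mp hb
      exact (reach i1 (Finset.mem_range.mp hi1)).symm.trans (reach i2 (Finset.mem_range.mp hi2))
    · rw [hS]
      rw [Finset.card_image_of_injOn ?_, Finset.card_range]
      intro i1 hi1 i2 hi2 hEq
      simp only [Finset.coe_range, Set.mem_Iio] at hi1 hi2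
      have e1 := hwval _ (hbound j i1 hj hi1)
      have e2 := hwval _ (hbound j i2 hj hi2)
      have hEq' : w (j * s + i1 + 1) = w (j * s + i2 + 1) := hEq
      have := congrArg Fin.val hEq'
      rw [e1, e2] at this
      omega
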